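/- Let Π be a 2×2 block Hermitian matrix with Π = [Π_11, Π_12; Π_21, Π_22], and let G_pq, G_pw, G_zq, G_zw, Γ be complex matrices of compatible dimensions such that I - Γ G_zw is invertible. Define the lumped matrix Ḡ = G_pq + G_pw (I - Γ G_zw)^{-1} Γ G_zq. If there exists a Hermitian positive definite matrix X and ε > 0 such that [G_pq, G_pw; I, 0]* Π [G_pq, G_pw; I, 0] - [-G_zq*Γ^T; I - G_zw*Γ^T] X [-Γ G_zq, I - Γ G_zw] ⪯ -εI, then [Ḡ; I]* Π [Ḡ; I] ⪯ -εI. -/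

import Mathlib

open Matrix
open scoped ComplexOrder

private lemma quad_eq {n k : Type*} [Fintype n] [Fintype k] (A : Matrix k n ℂ)
    (P : Matrix k k ℂ) (y : n → ℂ) :
    dotProduct (star y) ((Aᴴ * P * A) *ᵥ y)
      = dotProduct (star (A *ᵥ y)) (P *ᵥ (A *ᵥ y)) := by
  rw [← mulVec_mulVec, ← mulVec_mulVec, dotProduct_mulVec (star y) Aᴴ, ← star_mulVec]

/-- **Sparse IQC LMI implies lumped IQC LMI.**  With `Ḡ = G_pq + G_pw (I - Γ G_zw)⁻¹ Γ G_zq`,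
if there are a Hermitian positive definite `X` and `ε > 0` with
`[G_pq G_pw; I 0]* Π [G_pq G_pw; I 0] - [-G_zq*Γᵀ; I - G_zw*Γᵀ] X [-Γ G_zq, I - Γ G_zw] ⪯ -ε I`,
then `[Ḡ; I]* Π [Ḡ; I] ⪯ -ε I`. -/
theorem sparse_implies_lumped {d m nz : ℕ}
    (Gpq : Matrix (Fin d) (Fin d) ℂ) (Gpw : Matrix (Fin d) (Fin m) ℂ)
    (Gzq : Matrix (Fin nz) (Fin d) ℂ) (Gzw : Matrix (Fin nz) (Fin m) ℂ)
    (Gam : Matrix (Fin m) (Fin nz) ℂ)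
    (P11 P12 P21 P22 : Matrix (Fin d) (Fin d) ℂ)
    (hP : (fromBlocks P11 P12 P21 P22).IsHermitian)
    (hinv : IsUnit (1 - Gam * Gzw).det)
    (X : Matrix (Fin m) (Fin m) ℂ) (hX : X.PosDef)
    (ε : ℝ) (hε : 0 < ε)
    (hsparse :
      (-(((fromBlocks Gpq Gpw (1 : Matrix (Fin d) (Fin d) ℂ) 0)ᴴ *
            fromBlocks P11 P12 P21 P22 *
            fromBlocks Gpq Gpw (1 : Matrix (Fin d) (Fin d) ℂ) 0 -
          (fromCols (-(Gam * Gzq)) (1 - Gam * Gzw))ᴴ * X *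
            fromCols (-(Gam * Gzq)) (1 - Gam * Gzw)) +
         (ε : ℂ) • (1 : Matrix (Fin d ⊕ Fin m) (Fin d ⊕ Fin m) ℂ))).PosSemidef) :
    (-(((fromRows (Gpq + Gpw * (1 - Gam * Gzw)⁻¹ * Gam * Gzq) (1 : Matrix (Fin d) (Fin d) ℂ))ᴴ *
          fromBlocks P11 P12 P21 P22 *
          fromRows (Gpq + Gpw * (1 - Gam * Gzw)⁻¹ * Gam * Gzq) (1 : Matrix (Fin d) (Fin d) ℂ)) +
       (ε : ℂ) • (1 : Matrix (Fin d) (Fin d) ℂ))).PosSemidef := by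
  set Pb : Matrix (Fin d ⊕ Fin d) (Fin d ⊕ Fin d) ℂ := fromBlocks P11 P12 P21 P22 with hPb
  set Gb : Matrix (Fin d) (Fin d) ℂ := Gpq + Gpw * (1 - Gam * Gzw)⁻¹ * Gam * Gzq with hGb
  set B : Matrix (Fin d ⊕ Fin d) (Fin d) ℂ := fromRows Gb (1 : Matrix (Fin d) (Fin d) ℂ)
  set A : Matrix (Fin d ⊕ Fin d) (Fin d ⊕ Fin m) ℂ :=
    fromBlocks Gpq Gpw (1 : Matrix (Fin d) (Fin d) ℂ) 0 with hA
  set C : Matrix (Fin m) (Fin d ⊕ Fin m) ℂ :=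
    fromCols (-(Gam * Gzq)) (1 - Gam * Gzw) with hC
  refine Matrix.PosSemidef.of_dotProduct_mulVec_nonneg ?_ ?_
  · have h1 : ((ε : ℂ) • (1 : Matrix (Fin d) (Fin d) ℂ)).IsHermitian := by
      unfold Matrix.IsHermitian
      rw [conjTranspose_smul, conjTranspose_one]
      simp
    exact ((isHermitian_conjTranspose_mul_mul B hP).add h1).neg
  · intro x
    set w : Fin m → ℂ := ((1 - Gam * Gzw)⁻¹ * (Gam * Gzq)) *ᵥ x with hw
    set y : Fin d ⊕ Fin m → ℂ := Sum.elim x w with hy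
    have hCy : C *ᵥ y = 0 := by
      rw [hC, hy, fromCols_mulVec_sumElim, hw, mulVec_mulVec, ← Matrix.mul_assoc,
        Matrix.mul_nonsing_inv _ hinv, Matrix.one_mul, Matrix.neg_mulVec]
      exact neg_add_cancel _
    have hGbx : Gb *ᵥ x = Gpq *ᵥ x + Gpw *ᵥ w := by
      rw [hGb, Matrix.add_mulVec, hw, mulVec_mulVec, Matrix.mul_assoc, Matrix.mul_assoc]
    have hAy : A *ᵥ y = B *ᵥ x := by
      rw [hA, hy, fromBlocks_mulVec]
      simp only [Sum.elim_comp_inl, Sum.elim_comp_inr, Matrix.one_mulVec, Matrix.zero_mulVec,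
        add_zero]
      rw [fromRows_mulVec, Matrix.one_mulVec, hGbx]
    have key := hsparse.dotProduct_mulVec_nonneg y
    rw [Matrix.neg_mulVec, dotProduct_neg, Matrix.add_mulVec, dotProduct_add,
      Matrix.sub_mulVec, dotProduct_sub, quad_eq, quad_eq, hAy, hCy] at key
    simp only [Matrix.mulVec_zero, dotProduct_zero, sub_zero, smul_mulVec,
      Matrix.one_mulVec, dotProduct_smul] at key
    have hyy : dotProduct (star y) y = dotProduct (star x) x + dotProduct (star w) w := by
      rw [hy]
      simp [dotProduct, Fintype.sum_sum_type, Sum.elim_inl, Sum.elim_inr]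
    rw [hyy] at key
    rw [Matrix.neg_mulVec, dotProduct_neg, Matrix.add_mulVec, dotProduct_add, quad_eq]
    simp only [smul_mulVec, Matrix.one_mulVec, dotProduct_smul]
    have hww : 0 ≤ (ε : ℂ) • dotProduct (star w) w := by
      apply smul_nonneg _ (dotProduct_star_self_nonneg w)
      exact_mod_cast hε.le
    rw [neg_nonneg] at key ⊢
    calc dotProduct (star (B *ᵥ x)) (Pb *ᵥ (B *ᵥ x)) + (ε : ℂ) • dotProduct (star x) x
        ≤ dotProduct (star (B *ᵥ x)) (Pb *ᵥ (B *ᵥ x)) +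
          (ε : ℂ) • (dotProduct (star x) x + dotProduct (star w) w) := by
          rw [smul_add]
          linear_combination hww
      _ ≤ 0 := key
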